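/- Let L, μ, c, α, ε, σ, C, P, R, R′ be positive real numbers, η := μL/(μ+L), and assume αε ≤ 2/(μ+L) and cε ≤ 2. Let (A_k)_{k≥0} and (B_k)_{k≥0} be nonnegative real sequences satisfying, for all k ≥ 0: A_k ≤ R, B_k ≤ R′, A_{k+1} ≤ (1 − 3ηαε/2)A_k + Lαε(1/4 + L/(2η))B_k + 2ε²σ²(A_k + B_k + P), and B_{k+1} ≤ (1 − cε/2)B_k + (3L²α²ε/c)(A_k + C²) + 8ε²σ²(A_k + B_k + P). Then, with S := R + R′ + P, for all k ≥ 1: B_k ≤ (1 − cε/2)^k B_0 + (2/c)[(3L²α²/c)(R + C²) + 8εσ²S], and A_k ≤ (1 − 3ηαε/2)^k A_0 + k·Lαε(1/4 + L/(2η))·(max{1 − 3ηαε/2, 1 − cε/2})^{k−1}·B_0 + (4L/(3ηc))(1/4 + L/(2η))[(3L²α²/c)(R + C²) + 8εσ²S] + 4Sεσ²/(3ηα). -/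

import Mathlib

set_option maxHeartbeats 1000000

open Finset

private lemma rec_bound (p : ℝ) (hp : 0 ≤ p) (x D : ℕ → ℝ)
    (h : ∀ k, x (k + 1) ≤ p * x k + D k) :
    ∀ k, x k ≤ p ^ k * x 0 + ∑ i ∈ range k, p ^ (k - 1 - i) * D i := by
  intro k
  induction k with
  | zero => simp
  | succ n ih =>
    have h1 : p * x n ≤ p * (p ^ n * x 0 + ∑ i ∈ range n, p ^ (n - 1 - i) * D i) :=
      mul_le_mul_of_nonneg_left ih hp
    have h2 : p * (p ^ n * x 0 + ∑ i ∈ range n, p ^ (n - 1 - i) * D i)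
        = p ^ (n + 1) * x 0 + ∑ i ∈ range n, p ^ (n - i) * D i := by
      rw [mul_add, Finset.mul_sum]
      congr 1
      · ring
      · refine Finset.sum_congr rfl fun i hi => ?_
        have hi' : i < n := Finset.mem_range.mp hi
        have hni : n - i = (n - 1 - i) + 1 := by omega
        rw [hni, pow_succ]
        ring
    have h3 : ∑ i ∈ range (n + 1), p ^ (n + 1 - 1 - i) * D i
        = (∑ i ∈ range n, p ^ (n - i) * D i) + D n := by
      rw [Finset.sum_range_succ]
      simp
    calc x (n + 1) ≤ p * x n + D n := h n
      _ ≤ p ^ (n + 1) * x 0 + (∑ i ∈ range n, p ^ (n - i) * D i) + D n := by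
          rw [← h2]; linarith
      _ = _ := by rw [h3]; ring

/-- Sequence-level form of Theorem 2 (thm-1) of the paper for quantization of type 2. -/
theorem stmt12 (L μ c α ε σ C P R R' : ℝ)
    (hL : 0 < L) (hμ : 0 < μ) (hc : 0 < c) (hα : 0 < α) (hε : 0 < ε)
    (hσ : 0 < σ) (hC : 0 < C) (hP : 0 < P) (hR : 0 < R) (hR' : 0 < R')
    (η : ℝ) (hη : η = μ * L / (μ + L))
    (hαε : α * ε ≤ 2 / (μ + L)) (hcε : c * ε ≤ 2)
    (A B : ℕ → ℝ) (hA0 : ∀ k, 0 ≤ A k) (hB0 : ∀ k, 0 ≤ B k)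
    (hAR : ∀ k, A k ≤ R) (hBR : ∀ k, B k ≤ R')
    (hrecA : ∀ k, A (k + 1) ≤ (1 - 3 * η * α * ε / 2) * A k
      + L * α * ε * (1 / 4 + L / (2 * η)) * B k
      + 2 * ε ^ 2 * σ ^ 2 * (A k + B k + P))
    (hrecB : ∀ k, B (k + 1) ≤ (1 - c * ε / 2) * B k
      + 3 * L ^ 2 * α ^ 2 * ε / c * (A k + C ^ 2)
      + 8 * ε ^ 2 * σ ^ 2 * (A k + B k + P)) :
    ∀ k, 1 ≤ k →
      B k ≤ (1 - c * ε / 2) ^ k * B 0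
          + 2 / c * (3 * L ^ 2 * α ^ 2 / c * (R + C ^ 2)
            + 8 * ε * σ ^ 2 * (R + R' + P)) ∧
      A k ≤ (1 - 3 * η * α * ε / 2) ^ k * A 0
          + k * (L * α * ε * (1 / 4 + L / (2 * η))) *
            max (1 - 3 * η * α * ε / 2) (1 - c * ε / 2) ^ (k - 1) * B 0
          + 4 * L / (3 * η * c) * (1 / 4 + L / (2 * η)) *
            (3 * L ^ 2 * α ^ 2 / c * (R + C ^ 2) + 8 * ε * σ ^ 2 * (R + R' + P))
          + 4 * (R + R' + P) * ε * σ ^ 2 / (3 * η * α) := by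
  have hμL : 0 < μ + L := by linarith
  have hηpos : 0 < η := by rw [hη]; positivity
  have hαε' : α * ε * (μ + L) ≤ 2 := (le_div_iff₀ hμL).mp hαε
  have hηαε : η * (α * ε) ≤ 1 / 2 := by
    rw [hη, div_mul_eq_mul_div, div_le_iff₀ hμL]
    nlinarith [sq_nonneg (μ - L),
      mul_nonneg (mul_pos hμ hL).le (sub_nonneg.2 hαε'), hμ.le, hL.le, hμL]
  set S := R + R' + P with hS
  set E := 3 * L ^ 2 * α ^ 2 / c * (R + C ^ 2) + 8 * ε * σ ^ 2 * S with hE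
  set q := 1 - c * ε / 2 with hqdef
  set p := 1 - 3 * η * α * ε / 2 with hpdef
  set F := L * α * ε * (1 / 4 + L / (2 * η)) with hFdef
  clear_value S E q p F
  have hq0 : 0 ≤ q := by rw [hqdef]; linarith
  have hq1 : q < 1 := by rw [hqdef]; nlinarith [mul_pos hc hε]
  have hp0 : (0 : ℝ) ≤ p := by rw [hpdef]; linarith
  have hp1 : p < 1 := by rw [hpdef]; nlinarith [mul_pos (mul_pos hηpos hα) hε]
  have hE0 : 0 ≤ E := by rw [hE, hS]; positivity
  have hfrac : (0 : ℝ) < 1 / 4 + L / (2 * η) := by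
    have : 0 < L / (2 * η) := div_pos hL (by linarith)
    linarith
  have hF0 : 0 ≤ F := by
    rw [hFdef]
    exact mul_nonneg (by positivity) hfrac.le
  have hgeom : ∀ (r : ℝ), 0 ≤ r → r < 1 → ∀ n : ℕ,
      ∑ i ∈ range n, r ^ i ≤ 1 / (1 - r) := by
    intro r hr0 hr1 n
    rw [le_div_iff₀ (by linarith : (0:ℝ) < 1 - r)]
    have h := geom_sum_mul r n
    have h2 : (∑ i ∈ range n, r ^ i) * (1 - r) = 1 - r ^ n := by
      linear_combination -h
    rw [h2]
    linarith [pow_nonneg hr0 n]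
  -- B bound, valid for every k
  have hDB : ∀ i, 3 * L ^ 2 * α ^ 2 * ε / c * (A i + C ^ 2)
      + 8 * ε ^ 2 * σ ^ 2 * (A i + B i + P) ≤ ε * E := by
    intro i
    rw [hE, hS]
    have h1 := hAR i
    have h2 := hBR i
    have hc1 : (0:ℝ) ≤ 3 * L ^ 2 * α ^ 2 * ε / c := by positivity
    have hc2 : (0:ℝ) ≤ 8 * ε ^ 2 * σ ^ 2 := by positivity
    have e1 : 3 * L ^ 2 * α ^ 2 * ε / c * (A i + C ^ 2)
        ≤ 3 * L ^ 2 * α ^ 2 * ε / c * (R + C ^ 2) :=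
      mul_le_mul_of_nonneg_left (by linarith) hc1
    have e2 : 8 * ε ^ 2 * σ ^ 2 * (A i + B i + P)
        ≤ 8 * ε ^ 2 * σ ^ 2 * (R + R' + P) :=
      mul_le_mul_of_nonneg_left (by linarith) hc2
    have erec : ε * (3 * L ^ 2 * α ^ 2 / c * (R + C ^ 2) + 8 * ε * σ ^ 2 * (R + R' + P))
        = 3 * L ^ 2 * α ^ 2 * ε / c * (R + C ^ 2) + 8 * ε ^ 2 * σ ^ 2 * (R + R' + P) := by
      ring
    rw [erec]
    exact add_le_add e1 e2
  have hB : ∀ k, B k ≤ q ^ k * B 0 + 2 / c * E := by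
    intro k
    have hrec := rec_bound q hq0 B
      (fun i => 3 * L ^ 2 * α ^ 2 * ε / c * (A i + C ^ 2)
        + 8 * ε ^ 2 * σ ^ 2 * (A i + B i + P))
      (fun i => by
        show B (i + 1) ≤ q * B i + (3 * L ^ 2 * α ^ 2 * ε / c * (A i + C ^ 2)
          + 8 * ε ^ 2 * σ ^ 2 * (A i + B i + P))
        have := hrecB i; linarith) k
    have step1 : ∑ i ∈ range k, q ^ (k - 1 - i) *
          (3 * L ^ 2 * α ^ 2 * ε / c * (A i + C ^ 2)
            + 8 * ε ^ 2 * σ ^ 2 * (A i + B i + P))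
        ≤ ∑ i ∈ range k, q ^ (k - 1 - i) * (ε * E) :=
      Finset.sum_le_sum fun i _ => mul_le_mul_of_nonneg_left (hDB i) (pow_nonneg hq0 _)
    have step2 : ∑ i ∈ range k, q ^ (k - 1 - i) * (ε * E)
        = ∑ i ∈ range k, q ^ i * (ε * E) :=
      Finset.sum_range_reflect (fun j => q ^ j * (ε * E)) k
    have step3 : ∑ i ∈ range k, q ^ i * (ε * E)
        = (∑ i ∈ range k, q ^ i) * (ε * E) := (Finset.sum_mul _ _ _).symm
    have step4 : (∑ i ∈ range k, q ^ i) * (ε * E) ≤ (1 / (1 - q)) * (ε * E) :=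
      mul_le_mul_of_nonneg_right (hgeom q hq0 hq1 k) (mul_nonneg hε.le hE0)
    have h1q : 1 - q = c * ε / 2 := by rw [hqdef]; ring
    have step5 : (1 / (1 - q)) * (ε * E) = 2 / c * E := by
      rw [h1q]
      field_simp
    calc B k ≤ _ := hrec
      _ ≤ q ^ k * B 0 + 2 / c * E := by
          rw [step2, step3] at step1
          linarith
  intro k hk
  refine ⟨hB k, ?_⟩
  set m := max p q with hmdef
  have hm0 : 0 ≤ m := le_trans hp0 (le_max_left p q)
  set K := F * (2 / c * E) + 2 * ε ^ 2 * σ ^ 2 * S with hKdef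
  clear_value K
  have hK0 : 0 ≤ K := by
    rw [hKdef]
    have h1 : 0 ≤ F * (2 / c * E) := mul_nonneg hF0 (mul_nonneg (by positivity) hE0)
    have h2 : (0:ℝ) ≤ 2 * ε ^ 2 * σ ^ 2 * S := by rw [hS]; positivity
    linarith
  have hA' := rec_bound p hp0 A
    (fun i => F * B i + 2 * ε ^ 2 * σ ^ 2 * (A i + B i + P))
    (fun i => by
      show A (i + 1) ≤ p * A i + (F * B i + 2 * ε ^ 2 * σ ^ 2 * (A i + B i + P))
      have := hrecA i; linarith) k
  have hterm : ∀ i ∈ range k,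
      p ^ (k - 1 - i) * (F * B i + 2 * ε ^ 2 * σ ^ 2 * (A i + B i + P))
        ≤ F * B 0 * (p ^ (k - 1 - i) * q ^ i) + K * p ^ (k - 1 - i) := by
    intro i _
    have h2 : F * B i ≤ F * (q ^ i * B 0 + 2 / c * E) :=
      mul_le_mul_of_nonneg_left (hB i) hF0
    have h3 : 2 * ε ^ 2 * σ ^ 2 * (A i + B i + P) ≤ 2 * ε ^ 2 * σ ^ 2 * S := by
      have ha := hAR i
      have hb := hBR i
      have hcoef : (0:ℝ) ≤ 2 * ε ^ 2 * σ ^ 2 := by positivity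
      rw [hS]
      nlinarith [mul_nonneg hcoef
        (show (0:ℝ) ≤ (R + R' + P) - (A i + B i + P) by linarith)]
    have h1 : F * B i + 2 * ε ^ 2 * σ ^ 2 * (A i + B i + P)
        ≤ F * (q ^ i * B 0) + K := by
      rw [hKdef]; nlinarith [h2, h3]
    calc p ^ (k - 1 - i) * (F * B i + 2 * ε ^ 2 * σ ^ 2 * (A i + B i + P))
        ≤ p ^ (k - 1 - i) * (F * (q ^ i * B 0) + K) :=
          mul_le_mul_of_nonneg_left h1 (pow_nonneg hp0 _)
      _ = F * B 0 * (p ^ (k - 1 - i) * q ^ i) + K * p ^ (k - 1 - i) := by ring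
  have hsum0 : ∑ i ∈ range k,
        p ^ (k - 1 - i) * (F * B i + 2 * ε ^ 2 * σ ^ 2 * (A i + B i + P))
      ≤ F * B 0 * (∑ i ∈ range k, p ^ (k - 1 - i) * q ^ i)
        + K * (∑ i ∈ range k, p ^ (k - 1 - i)) := by
    calc ∑ i ∈ range k, p ^ (k - 1 - i) * (F * B i + 2 * ε ^ 2 * σ ^ 2 * (A i + B i + P))
        ≤ ∑ i ∈ range k, (F * B 0 * (p ^ (k - 1 - i) * q ^ i) + K * p ^ (k - 1 - i)) :=
          Finset.sum_le_sum hterm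
      _ = _ := by rw [Finset.sum_add_distrib, ← Finset.mul_sum, ← Finset.mul_sum]
  have hsum1 : ∑ i ∈ range k, p ^ (k - 1 - i) * q ^ i ≤ (k : ℝ) * m ^ (k - 1) := by
    calc ∑ i ∈ range k, p ^ (k - 1 - i) * q ^ i ≤ ∑ _i ∈ range k, m ^ (k - 1) := by
          refine Finset.sum_le_sum fun i hi => ?_
          have hik : i < k := Finset.mem_range.mp hi
          have e1 : p ^ (k - 1 - i) ≤ m ^ (k - 1 - i) :=
            pow_le_pow_left₀ hp0 (le_max_left p q) _
          have e2 : q ^ i ≤ m ^ i := pow_le_pow_left₀ hq0 (le_max_right p q) _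
          calc p ^ (k - 1 - i) * q ^ i ≤ m ^ (k - 1 - i) * m ^ i :=
              mul_le_mul e1 e2 (pow_nonneg hq0 _) (pow_nonneg hm0 _)
            _ = m ^ (k - 1) := by rw [← pow_add]; congr 1; omega
      _ = (k : ℝ) * m ^ (k - 1) := by
          rw [Finset.sum_const, Finset.card_range, nsmul_eq_mul]
  have hsum2 : ∑ i ∈ range k, p ^ (k - 1 - i) ≤ 1 / (1 - p) := by
    have hre : ∑ i ∈ range k, p ^ (k - 1 - i) = ∑ i ∈ range k, p ^ i :=
      Finset.sum_range_reflect (fun j => p ^ j) k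
    rw [hre]
    exact hgeom p hp0 hp1 k
  have hFB0 : 0 ≤ F * B 0 := mul_nonneg hF0 (hB0 0)
  have t1 : F * B 0 * (∑ i ∈ range k, p ^ (k - 1 - i) * q ^ i)
      ≤ F * B 0 * ((k : ℝ) * m ^ (k - 1)) := mul_le_mul_of_nonneg_left hsum1 hFB0
  have t2 : K * (∑ i ∈ range k, p ^ (k - 1 - i)) ≤ K * (1 / (1 - p)) :=
    mul_le_mul_of_nonneg_left hsum2 hK0
  have h1p : 1 - p = 3 * η * α * ε / 2 := by rw [hpdef]; ring
  have hconst : K * (1 / (1 - p))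
      = 4 * L / (3 * η * c) * (1 / 4 + L / (2 * η)) * E
        + 4 * S * ε * σ ^ 2 / (3 * η * α) := by
    rw [hKdef, hFdef, h1p]
    field_simp
    ring
  linarith [hA', hsum0, t1, t2]
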